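/- Let 0 < q < 1 and let (c_j)_{j∈ℤ} be complex numbers such that φ(z) = ∑_{j∈ℤ} c_j z^j converges for all z ≠ 0 and c_j = o(q^{j(j+1)/2}) as j → +∞. Let φ̄(z) = ∏_{s=1}^∞ (1 - q^s z). Then M(r;φ) = o(M(r;φ̄)) as r → ∞, where M(r;g) = max_{|z|=r} |g(z)|. -/

import Mathlib

open Filter Finset

section Aux
variable {q r : ℝ}

lemma my_hasProd_le {f g : ℕ → ℝ} {a b : ℝ} (h0 : ∀ i, 0 ≤ f i) (h : ∀ i, f i ≤ g i)
    (hf : HasProd f a) (hg : HasProd g b) : a ≤ b :=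
  le_of_tendsto_of_tendsto' hf hg fun _F => Finset.prod_le_prod (fun i _ => h0 i) (fun i _ => h i)

lemma my_sum_le_prod (a : ℕ → ℝ) (ha : ∀ s, 0 ≤ a s) (N : ℕ) :
    ∑ j ∈ Finset.range (N + 1), ∏ s ∈ Finset.range j, a s
      ≤ ∏ s ∈ Finset.range N, (1 + a s) := by
  induction N with
  | zero => simp
  | succ N ih =>
    rw [Finset.sum_range_succ, Finset.prod_range_succ, Finset.prod_range_succ]
    have h1 : ∏ s ∈ Finset.range N, a s ≤ ∏ s ∈ Finset.range N, (1 + a s) :=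
      Finset.prod_le_prod (fun i _ => ha i) (fun i _ => by linarith [ha i])
    have h2 : (0:ℝ) ≤ a N := ha N
    nlinarith [Finset.prod_nonneg (fun i (_ : i ∈ Finset.range N) => ha i)]

lemma my_gauss (q r : ℝ) (j : ℕ) :
    ∏ s ∈ Finset.range j, (q ^ (s + 1) * r) = q ^ (j * (j + 1) / 2) * r ^ j := by
  induction j with
  | zero => simp
  | succ j ih =>
    rw [Finset.prod_range_succ, ih]
    obtain ⟨k, hk⟩ := Nat.even_mul_succ_self j
    have h2 : (j + 1) * (j + 1 + 1) = j * (j + 1) + 2 * (j + 1) := by ring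
    have he : (j + 1) * (j + 1 + 1) / 2 = j * (j + 1) / 2 + (j + 1) := by omega
    rw [he, pow_add, pow_succ]
    ring

lemma my_le_hasProd {g : ℕ → ℝ} {b : ℝ} (h1 : ∀ i, 1 ≤ g i) (hg : HasProd g b) (N : ℕ) :
    ∏ s ∈ Finset.range N, g s ≤ b := by
  refine ge_of_tendsto hg (eventually_atTop.2 ⟨Finset.range N, fun F hF => ?_⟩)
  have h1' : (1:ℝ) ≤ ∏ s ∈ F \ Finset.range N, g s := by
    calc (1:ℝ) = ∏ s ∈ F \ Finset.range N, 1 := by simp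
      _ ≤ ∏ s ∈ F \ Finset.range N, g s :=
        Finset.prod_le_prod (fun i _ => zero_le_one) (fun i _ => h1 i)
  have h0 : (0:ℝ) ≤ ∏ s ∈ Finset.range N, g s :=
    Finset.prod_nonneg (fun i _ => le_trans zero_le_one (h1 i))
  calc ∏ s ∈ Finset.range N, g s ≤ (∏ s ∈ F \ Finset.range N, g s) * ∏ s ∈ Finset.range N, g s := by
        nlinarith
    _ = ∏ s ∈ F, g s := Finset.prod_sdiff hF

lemma my_multipliable (hq0 : 0 < q) (hq1 : q < 1) (hr : 0 ≤ r) :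
    Multipliable (fun s : ℕ => 1 + q ^ (s + 1) * r) := by
  have key : ∀ n : ℕ, (0:ℝ) ≤ q ^ (n + 1) * r := fun n =>
    mul_nonneg (pow_nonneg hq0.le _) hr
  have hpos : ∀ (x : Unit) (n : ℕ), 0 < (fun (s : ℕ) (_ : Unit) => 1 + q ^ (s + 1) * r) n x := by
    intro _ n; have := key n; simp only; linarith
  have hsum : ∀ (x : Unit),
      Summable fun n : ℕ => Real.log ((fun (s : ℕ) (_ : Unit) => 1 + q ^ (s + 1) * r) n x) := by
    intro _
    simp only
    have hgeo : Summable (fun n : ℕ => q ^ (n + 1) * r) := by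
      have := (summable_geometric_of_lt_one hq0.le hq1).mul_right (q * r)
      refine this.congr fun n => ?_
      rw [pow_succ]; ring
    refine Summable.of_nonneg_of_le (fun n => ?_) (fun n => ?_) hgeo
    · exact Real.log_nonneg (by linarith [key n])
    · have h := Real.log_le_sub_one_of_pos (show (0:ℝ) < 1 + q ^ (n+1) * r by linarith [key n])
      linarith
  exact Real.multipliable_of_summable_log (fun n => hpos () n) (hsum ())

lemma my_one_le (hq0 : 0 < q) (hr : 0 ≤ r)
    (hm : Multipliable (fun s : ℕ => 1 + q ^ (s + 1) * r)) :
    (1:ℝ) ≤ ∏' s : ℕ, (1 + q ^ (s + 1) * r) :=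
  my_hasProd_le (fun _ => zero_le_one)
    (fun i => by nlinarith [mul_nonneg (pow_nonneg hq0.le (i+1)) hr]) hasProd_one hm.hasProd

lemma my_abs_at_neg_r (hq0 : 0 < q) (hr : 0 ≤ r)
    (hm : Multipliable (fun s : ℕ => 1 + q ^ (s + 1) * r)) :
    ‖∏' s : ℕ, (1 - (q : ℂ) ^ (s + 1) * (-(r:ℝ) : ℂ))‖
      = ∏' s : ℕ, (1 + q ^ (s + 1) * r) := by
  have hcast : (fun s : ℕ => ((1 + q ^ (s + 1) * r : ℝ) : ℂ))
      = fun s : ℕ => (1 - (q : ℂ) ^ (s + 1) * (-(r:ℝ) : ℂ)) := by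
    funext s; push_cast; ring
  have hP : HasProd (fun s : ℕ => (1 - (q : ℂ) ^ (s + 1) * (-(r:ℝ) : ℂ)))
      ((∏' s : ℕ, (1 + q ^ (s + 1) * r) : ℝ) : ℂ) := by
    have := hm.hasProd.map Complex.ofRealHom.toMonoidHom Complex.continuous_ofReal
    rw [show (Complex.ofRealHom.toMonoidHom : ℝ →* ℂ) ∘ (fun s : ℕ => 1 + q ^ (s + 1) * r)
      = fun s : ℕ => ((1 + q ^ (s + 1) * r : ℝ) : ℂ) from rfl, hcast] at this
    exact this
  rw [hP.tprod_eq, Complex.norm_real, Real.norm_eq_abs,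
    abs_of_nonneg (le_trans zero_le_one (my_one_le hq0 hr hm))]

lemma my_abs_le (hq0 : 0 < q) (hr : 0 ≤ r)
    (hm : Multipliable (fun s : ℕ => 1 + q ^ (s + 1) * r))
    (z : ℂ) (hz : ‖z‖ = r) :
    ‖∏' s : ℕ, (1 - (q : ℂ) ^ (s + 1) * z)‖ ≤ ∏' s : ℕ, (1 + q ^ (s + 1) * r) := by
  by_cases hmc : Multipliable (fun s : ℕ => (1 : ℂ) - (q : ℂ) ^ (s + 1) * z)
  · rw [hmc.norm_tprod]
    refine my_hasProd_le (fun i => norm_nonneg _) (fun i => ?_)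
      hmc.norm.hasProd hm.hasProd
    calc ‖1 - (q:ℂ)^(i+1) * z‖ ≤ ‖(1:ℂ)‖ + ‖(q:ℂ)^(i+1) * z‖ := by
          exact norm_sub_le _ _
      _ = 1 + q ^ (i+1) * r := by
          rw [norm_one, norm_mul, norm_pow, Complex.norm_real, Real.norm_eq_abs, abs_of_nonneg hq0.le, hz]
  · rw [tprod_eq_one_of_not_multipliable hmc, norm_one]
    exact my_one_le hq0 hr hm

lemma my_Q (hq0 : 0 < q) (hr : 0 ≤ r)
    (hm : Multipliable (fun s : ℕ => 1 + q ^ (s + 1) * r)) :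
    Summable (fun j : ℕ => q ^ (j * (j + 1) / 2) * r ^ j) ∧
      ∑' j : ℕ, q ^ (j * (j + 1) / 2) * r ^ j ≤ ∏' s : ℕ, (1 + q ^ (s + 1) * r) := by
  have key : ∀ s : ℕ, (0:ℝ) ≤ q ^ (s + 1) * r := fun s => mul_nonneg (pow_nonneg hq0.le _) hr
  have hpart : ∀ N : ℕ, ∑ j ∈ Finset.range N, q ^ (j * (j + 1) / 2) * r ^ j
      ≤ ∏' s : ℕ, (1 + q ^ (s + 1) * r) := by
    intro N
    have h1 : ∑ j ∈ Finset.range N, q ^ (j * (j + 1) / 2) * r ^ j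
        ≤ ∑ j ∈ Finset.range (N + 1), q ^ (j * (j + 1) / 2) * r ^ j :=
      Finset.sum_le_sum_of_subset_of_nonneg (Finset.range_subset_range.2 (Nat.le_succ N))
        (fun i _ _ => mul_nonneg (pow_nonneg hq0.le _) (pow_nonneg hr _))
    have h2 : ∑ j ∈ Finset.range (N + 1), q ^ (j * (j + 1) / 2) * r ^ j
        ≤ ∏ s ∈ Finset.range N, (1 + q ^ (s + 1) * r) := by
      have := my_sum_le_prod (fun s => q ^ (s + 1) * r) key N
      rwa [Finset.sum_congr rfl (fun j _ => (my_gauss q r j).symm)]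
    have h3 := my_le_hasProd (fun i => by linarith [key i]) hm.hasProd N
    linarith
  have hs : Summable (fun j : ℕ => q ^ (j * (j + 1) / 2) * r ^ j) :=
    summable_of_sum_range_le (fun n => mul_nonneg (pow_nonneg hq0.le _) (pow_nonneg hr _)) hpart
  exact ⟨hs, hs.tsum_le_of_sum_range_le hpart⟩

end Aux

set_option maxHeartbeats 1000000 in
/-- Lemma 1: if the Laurent coefficients satisfy c_j = o(q^{j(j+1)/2}) as j → +∞,
then M(r;φ) = o(M(r;φ̄)) as r → ∞, where φ̄(z) = ∏_{s=1}^∞ (1 - q^s z). -/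
theorem max_modulus_littleO (q : ℝ) (hq0 : 0 < q) (hq1 : q < 1)
    (c : ℤ → ℂ)
    (hconv : ∀ z : ℂ, z ≠ 0 → Summable fun j : ℤ => c j * z ^ j)
    (hc : Asymptotics.IsLittleO atTop (fun j : ℕ => c (j : ℤ))
      (fun j : ℕ => (q ^ (j * (j + 1) / 2) : ℝ))) :
    Asymptotics.IsLittleO atTop
      (fun r : ℝ => sSup ((fun z : ℂ => ‖∑' j : ℤ, c j * z ^ j‖) ''
        Metric.sphere (0 : ℂ) r))
      (fun r : ℝ => sSup ((fun z : ℂ => ‖∏' s : ℕ, (1 - (q : ℂ) ^ (s + 1) * z)‖) ''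
        Metric.sphere (0 : ℂ) r)) := by
  rw [Asymptotics.isLittleO_iff]
  intro C hC
  have hε : 0 < C / 2 := half_pos hC
  -- extract J from the littleO hypothesis
  obtain ⟨J, hJ⟩ := eventually_atTop.mp (Asymptotics.isLittleO_iff.mp hc hε)
  have hJ' : ∀ n : ℕ, J ≤ n → ‖c (n : ℤ)‖ ≤ C / 2 * q ^ (n * (n + 1) / 2) := by
    intro n hn
    have := hJ n hn
    rwa [Real.norm_eq_abs (q ^ _), abs_of_nonneg (pow_nonneg hq0.le _)] at this
  -- summability of c over ℤ
  have hsc : Summable (fun j : ℤ => c j) := by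
    have := hconv 1 one_ne_zero
    exact this.congr fun j => by simp
  have hscn : Summable (fun j : ℤ => ‖c j‖) := by
    rw [summable_norm_iff]; exact hsc
  have hAsum : Summable (fun n : ℕ => ‖c (-(n+1) : ℤ)‖) :=
    hscn.comp_injective (fun a b hab => by omega)
  set A : ℝ := ∑' n : ℕ, ‖c (-(n+1) : ℤ)‖ with hA
  set B : ℝ := ∑ n ∈ Finset.range J, ‖c (n : ℤ)‖ with hB
  have hA0 : 0 ≤ A := tsum_nonneg fun n => norm_nonneg _
  have hB0 : 0 ≤ B := Finset.sum_nonneg fun n _ => norm_nonneg _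
  set K : ℝ := q ^ ((J + 1) * (J + 2) / 2) with hKdef
  have hK : 0 < K := pow_pos hq0 _
  filter_upwards [eventually_ge_atTop (1:ℝ),
    eventually_ge_atTop ((A + B) / (C / 2 * K))] with r hr1 hr2
  have hr0 : (0:ℝ) < r := lt_of_lt_of_le zero_lt_one hr1
  have hm := my_multipliable hq0 hq1 hr0.le
  set g : ℝ := ∏' s : ℕ, (1 + q ^ (s + 1) * r) with hg
  have hg1 : (1:ℝ) ≤ g := my_one_le hq0 hr0.le hm
  -- lower bound for the RHS sup
  have hBdd : BddAbove ((fun z : ℂ => ‖∏' s : ℕ, (1 - (q : ℂ) ^ (s + 1) * z)‖) ''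
      Metric.sphere (0 : ℂ) r) := by
    refine ⟨g, ?_⟩
    rintro _ ⟨z, hz, rfl⟩
    exact my_abs_le hq0 hr0.le hm z (by rwa [← mem_sphere_zero_iff_norm])
  have hgle : g ≤ sSup ((fun z : ℂ => ‖∏' s : ℕ, (1 - (q : ℂ) ^ (s + 1) * z)‖) ''
      Metric.sphere (0 : ℂ) r) := by
    have hmem : ‖∏' s : ℕ, (1 - (q : ℂ) ^ (s + 1) * (-(r:ℝ) : ℂ))‖
        ∈ ((fun z : ℂ => ‖∏' s : ℕ, (1 - (q : ℂ) ^ (s + 1) * z)‖) ''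
          Metric.sphere (0 : ℂ) r) := by
      refine ⟨(-(r:ℝ) : ℂ), ?_, rfl⟩
      rw [mem_sphere_zero_iff_norm]
      simp [abs_of_nonneg hr0.le]
    have h := le_csSup hBdd hmem
    have heq : ‖∏' s : ℕ, (1 - (q : ℂ) ^ (s + 1) * (-(r:ℝ) : ℂ))‖ = g :=
      my_abs_at_neg_r hq0 hr0.le hm
    rw [← heq]
    exact h
  -- the series bound Q
  obtain ⟨hQs, hQle⟩ := my_Q hq0 hr0.le hm
  -- lower bound g ≥ K * r^(J+1)
  have hglow : K * r ^ (J + 1) ≤ g := by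
    have h1 : ∏ s ∈ Finset.range (J + 1), (q ^ (s + 1) * r)
        ≤ ∏ s ∈ Finset.range (J + 1), (1 + q ^ (s + 1) * r) :=
      Finset.prod_le_prod (fun i _ => mul_nonneg (pow_nonneg hq0.le _) hr0.le)
        (fun i _ => by nlinarith [mul_nonneg (pow_nonneg hq0.le (i+1)) hr0.le])
    have h2 := my_le_hasProd
      (fun i => by nlinarith [mul_nonneg (pow_nonneg hq0.le (i+1)) hr0.le]) hm.hasProd (J + 1)
    rw [my_gauss q r (J + 1)] at h1
    rw [show (J + 1) * (J + 1 + 1) = (J + 1) * (J + 2) from by ring] at h1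
    calc K * r ^ (J + 1) ≤ ∏ s ∈ Finset.range (J + 1), (1 + q ^ (s + 1) * r) := h1
      _ ≤ g := h2
  -- upper bound for the LHS sup: every element ≤ A + B * r^J + (C/2) * g
  have hup : ∀ z : ℂ, z ∈ Metric.sphere (0:ℂ) r →
      ‖∑' j : ℤ, c j * z ^ j‖ ≤ A + B * r ^ J + C / 2 * g := by
    intro z hz
    have hzr : ‖z‖ = r := mem_sphere_zero_iff_norm.mp hz
    have hz0 : z ≠ 0 := by
      intro h; rw [h, norm_zero] at hzr; exact hr0.ne hzr
    have hsz := hconv z hz0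
    have hszn : Summable (fun j : ℤ => ‖c j * z ^ j‖) := by
      rw [summable_norm_iff]; exact hsz
    have hnorm : ∀ j : ℤ, ‖c j * z ^ j‖ = ‖c j‖ * r ^ j := by
      intro j; rw [norm_mul, norm_zpow, hzr]
    have hu : Summable (fun j : ℤ => ‖c j‖ * r ^ j) := hszn.congr hnorm
    have habs : ‖∑' j : ℤ, c j * z ^ j‖ ≤ ∑' j : ℤ, ‖c j‖ * r ^ j := by
      calc ‖∑' j : ℤ, c j * z ^ j‖ ≤ ∑' j : ℤ, ‖c j * z ^ j‖ := norm_tsum_le_tsum_norm hszn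
        _ = ∑' j : ℤ, ‖c j‖ * r ^ j := tsum_congr hnorm
    -- split the ℤ-sum
    have hupos : Summable (fun n : ℕ => ‖c (n : ℤ)‖ * r ^ (n : ℤ)) :=
      hu.comp_injective (fun a b hab => by omega)
    have huneg : Summable (fun n : ℕ => ‖c (-(n+1) : ℤ)‖ * r ^ (-(n+1) : ℤ)) :=
      hu.comp_injective (fun a b hab => by omega)
    have hsplit : ∑' j : ℤ, ‖c j‖ * r ^ j
        = (∑' n : ℕ, ‖c (n : ℤ)‖ * r ^ (n : ℤ)) + ∑' n : ℕ, ‖c (-(n+1) : ℤ)‖ * r ^ (-(n+1) : ℤ) :=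
      tsum_of_nat_of_neg_add_one hupos huneg
    -- negative part ≤ A
    have hneg : ∑' n : ℕ, ‖c (-(n+1) : ℤ)‖ * r ^ (-(n+1) : ℤ) ≤ A := by
      refine Summable.tsum_le_tsum (fun n => ?_) huneg hAsum
      have h1 : r ^ (-(n+1) : ℤ) ≤ 1 := zpow_le_one_of_nonpos₀ hr1 (by omega)
      have h2 : (0:ℝ) < r ^ (-(n+1) : ℤ) := zpow_pos hr0 _
      nlinarith [norm_nonneg (c (-(n+1) : ℤ))]
    -- positive part
    have hposnat : (fun n : ℕ => ‖c (n : ℤ)‖ * r ^ (n : ℤ)) = fun n : ℕ => ‖c (n : ℤ)‖ * r ^ n := by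
      funext n; rw [zpow_natCast]
    rw [hposnat] at hupos
    have hpos : ∑' n : ℕ, ‖c (n : ℤ)‖ * r ^ n ≤ B * r ^ J + C / 2 * g := by
      have hsplit2 := (hupos.sum_add_tsum_nat_add J).symm
      have hhead : ∑ n ∈ Finset.range J, ‖c (n : ℤ)‖ * r ^ n ≤ B * r ^ J := by
        rw [hB, Finset.sum_mul]
        refine Finset.sum_le_sum fun n hn => ?_
        have : r ^ n ≤ r ^ J := pow_le_pow_right₀ hr1 (Finset.mem_range.mp hn).le
        nlinarith [norm_nonneg (c (n : ℤ))]
      have htail : ∑' n : ℕ, ‖c ((n + J : ℕ) : ℤ)‖ * r ^ (n + J) ≤ C / 2 * g := by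
        have hQs' : Summable (fun n : ℕ => q ^ ((n + J) * ((n + J) + 1) / 2) * r ^ (n + J)) :=
          (summable_nat_add_iff J).2 hQs
        have htt : ∑' n : ℕ, ‖c ((n + J : ℕ) : ℤ)‖ * r ^ (n + J)
            ≤ ∑' n : ℕ, C / 2 * (q ^ ((n + J) * ((n + J) + 1) / 2) * r ^ (n + J)) := by
          refine Summable.tsum_le_tsum (fun n => ?_) ((summable_nat_add_iff J).2 hupos)
            (hQs'.mul_left (C / 2))
          have h1 := hJ' (n + J) (Nat.le_add_left J n)
          have h2 : (0:ℝ) ≤ r ^ (n + J) := pow_nonneg hr0.le _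
          calc ‖c ((n + J : ℕ) : ℤ)‖ * r ^ (n + J)
              ≤ C / 2 * q ^ ((n + J) * ((n + J) + 1) / 2) * r ^ (n + J) :=
                mul_le_mul_of_nonneg_right h1 h2
            _ = C / 2 * (q ^ ((n + J) * ((n + J) + 1) / 2) * r ^ (n + J)) := by ring
        rw [tsum_mul_left] at htt
        have htQ : ∑' n : ℕ, q ^ ((n + J) * ((n + J) + 1) / 2) * r ^ (n + J)
            ≤ ∑' j : ℕ, q ^ (j * (j + 1) / 2) * r ^ j := by
          have := (hQs.sum_add_tsum_nat_add J).symm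
          have hh : (0:ℝ) ≤ ∑ n ∈ Finset.range J, q ^ (n * (n + 1) / 2) * r ^ n :=
            Finset.sum_nonneg fun n _ => mul_nonneg (pow_nonneg hq0.le _) (pow_nonneg hr0.le _)
          linarith
        calc ∑' n : ℕ, ‖c ((n + J : ℕ) : ℤ)‖ * r ^ (n + J)
            ≤ C / 2 * ∑' n : ℕ, q ^ ((n + J) * ((n + J) + 1) / 2) * r ^ (n + J) := htt
          _ ≤ C / 2 * g := mul_le_mul_of_nonneg_left (le_trans htQ hQle) hε.le
      linarith [hsplit2]
    rw [hsplit, hposnat] at habs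
    linarith
  -- combine
  have hMup : sSup ((fun z : ℂ => ‖∑' j : ℤ, c j * z ^ j‖) ''
      Metric.sphere (0 : ℂ) r) ≤ A + B * r ^ J + C / 2 * g := by
    have hg0 : (0:ℝ) ≤ g := le_trans zero_le_one hg1
    have hrJ0 : (0:ℝ) ≤ r ^ J := pow_nonneg hr0.le J
    refine Real.sSup_le ?_ (by nlinarith)
    rintro _ ⟨z, hz, rfl⟩
    exact hup z hz
  -- A + B * r^J ≤ (C/2) * g
  have hr2' : A + B ≤ C / 2 * K * r := by
    rw [div_le_iff₀ (by positivity)] at hr2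
    nlinarith
  have hfin : A + B * r ^ J ≤ C / 2 * g := by
    have hrJ : (1:ℝ) ≤ r ^ J := one_le_pow₀ hr1
    have h1 : A + B * r ^ J ≤ (A + B) * r ^ J := by nlinarith
    have h2 : (A + B) * r ^ J ≤ C / 2 * K * r * r ^ J := by nlinarith [pow_nonneg hr0.le J]
    have h3 : C / 2 * K * r * r ^ J = C / 2 * (K * r ^ (J + 1)) := by rw [pow_succ]; ring
    nlinarith [hglow]
  -- finish
  have hM0 : 0 ≤ sSup ((fun z : ℂ => ‖∑' j : ℤ, c j * z ^ j‖) ''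
      Metric.sphere (0 : ℂ) r) :=
    Real.sSup_nonneg (by rintro _ ⟨z, hz, rfl⟩; exact norm_nonneg _)
  have hMbar0 : (0:ℝ) ≤ sSup ((fun z : ℂ => ‖∏' s : ℕ, (1 - (q : ℂ) ^ (s + 1) * z)‖) ''
      Metric.sphere (0 : ℂ) r) := le_trans (le_trans zero_le_one hg1) hgle
  rw [Real.norm_eq_abs, Real.norm_eq_abs, abs_of_nonneg hM0, abs_of_nonneg hMbar0]
  calc sSup ((fun z : ℂ => ‖∑' j : ℤ, c j * z ^ j‖) '' Metric.sphere (0 : ℂ) r)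
      ≤ A + B * r ^ J + C / 2 * g := hMup
    _ ≤ C / 2 * g + C / 2 * g := by linarith
    _ = C * g := by ring
    _ ≤ C * sSup ((fun z : ℂ => ‖∏' s : ℕ, (1 - (q : ℂ) ^ (s + 1) * z)‖) ''
        Metric.sphere (0 : ℂ) r) := mul_le_mul_of_nonneg_left hgle hC.le
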